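/- Let R and S be orthogonal projections on a real Hilbert space H with ker(R) ∩ ker(S) = {0}, r ∈ ran(R), s ∈ ran(S), τ ∈ (0,1), and f_τ the minimizer of (1−τ)‖Rf − r‖² + τ‖Sf − s‖². Then f_τ also minimizes f ↦ max{(1−τ)‖Rf − r‖, τ‖Sf − s‖} over H. -/

import Mathlib

open scoped RealInnerProductSpace

set_option maxHeartbeats 1000000 in
/-- The minimizer of the quadratic regularization functional also minimizes
the minimax objective `max{(1-τ)‖Rf - r‖, τ‖Sf - s‖}`. -/
theorem stmt_6
    {H : Type*} [NormedAddCommGroup H] [InnerProductSpace ℝ H] [CompleteSpace H]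
    (R S : H →L[ℝ] H)
    (hR : IsSelfAdjoint R) (hRi : R ∘L R = R)
    (hS : IsSelfAdjoint S) (hSi : S ∘L S = S)
    (hker : LinearMap.ker (R : H →ₗ[ℝ] H) ⊓ LinearMap.ker (S : H →ₗ[ℝ] H) = ⊥)
    (r s : H) (hr : r ∈ LinearMap.range (R : H →ₗ[ℝ] H)) (hs : s ∈ LinearMap.range (S : H →ₗ[ℝ] H))
    (τ : ℝ) (hτ : τ ∈ Set.Ioo (0 : ℝ) 1)
    (fτ : H)
    (hfτ : IsMinOn (fun f : H => (1 - τ) * ‖R f - r‖ ^ 2 + τ * ‖S f - s‖ ^ 2) Set.univ fτ) :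
    IsMinOn (fun f : H => max ((1 - τ) * ‖R f - r‖) (τ * ‖S f - s‖)) Set.univ fτ := by
  obtain ⟨hτ0, hτ1⟩ := hτ
  have hτ1' : (0:ℝ) < 1 - τ := by linarith
  have hRsym := (ContinuousLinearMap.isSelfAdjoint_iff_isSymmetric.mp hR)
  have hSsym := (ContinuousLinearMap.isSelfAdjoint_iff_isSymmetric.mp hS)
  obtain ⟨r₀, hr₀⟩ := hr
  obtain ⟨s₀, hs₀⟩ := hs
  have hRr : R r = r := by
    rw [← hr₀]
    have := congrArg (fun T : H →L[ℝ] H => T r₀) hRi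
    simpa using this
  have hSs : S s = s := by
    rw [← hs₀]
    have := congrArg (fun T : H →L[ℝ] H => T s₀) hSi
    simpa using this
  set u := R fτ - r with hu
  set v := S fτ - s with hv
  have hRu : R u = u := by
    have h2 : R (R fτ) = R fτ := by
      have := congrArg (fun T : H →L[ℝ] H => T fτ) hRi
      simpa using this
    simp [hu, map_sub, hRr, h2]
  have hSv : S v = v := by
    have h2 : S (S fτ) = S fτ := by
      have := congrArg (fun T : H →L[ℝ] H => T fτ) hSi
      simpa using this
    simp [hv, map_sub, hSs, h2]
  set w := (1 - τ) • u + τ • v with hw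
  have hQle : ∀ x : H, (1 - τ) * ‖R fτ - r‖ ^ 2 + τ * ‖S fτ - s‖ ^ 2
      ≤ (1 - τ) * ‖R x - r‖ ^ 2 + τ * ‖S x - s‖ ^ 2 := fun x =>
    isMinOn_iff.mp hfτ x (Set.mem_univ x)
  -- first-order condition: w = 0
  have hkey : ∀ t : ℝ,
      0 ≤ 2 * t * ‖w‖ ^ 2 + t ^ 2 * ((1 - τ) * ‖R w‖ ^ 2 + τ * ‖S w‖ ^ 2) := by
    intro t
    have h := hQle (fτ + t • w)
    rw [← hu, ← hv] at h
    have e1 : R (fτ + t • w) - r = u + t • R w := by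
      simp only [map_add, map_smul]; rw [hu]; abel
    have e2 : S (fτ + t • w) - s = v + t • S w := by
      simp only [map_add, map_smul]; rw [hv]; abel
    rw [e1, e2] at h
    have i1 : (⟪u, R w⟫ : ℝ) = ⟪u, w⟫ := by
      have h2 := hRsym u w
      simp only [ContinuousLinearMap.coe_coe] at h2
      rw [← h2, hRu]
    have i2 : (⟪v, S w⟫ : ℝ) = ⟪v, w⟫ := by
      have h2 := hSsym v w
      simp only [ContinuousLinearMap.coe_coe] at h2
      rw [← h2, hSv]
    have n1 : ‖u + t • R w‖ ^ 2 = ‖u‖ ^ 2 + 2 * (t * ⟪u, w⟫) + t ^ 2 * ‖R w‖ ^ 2 := by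
      rw [norm_add_sq_real, real_inner_smul_right, norm_smul, mul_pow,
        Real.norm_eq_abs, sq_abs, i1]
    have n2 : ‖v + t • S w‖ ^ 2 = ‖v‖ ^ 2 + 2 * (t * ⟪v, w⟫) + t ^ 2 * ‖S w‖ ^ 2 := by
      rw [norm_add_sq_real, real_inner_smul_right, norm_smul, mul_pow,
        Real.norm_eq_abs, sq_abs, i2]
    rw [n1, n2] at h
    have iw : (1 - τ) * ⟪u, w⟫ + τ * ⟪v, w⟫ = ‖w‖ ^ 2 := by
      rw [← real_inner_smul_left, ← real_inner_smul_left, ← inner_add_left, ← hw,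
        real_inner_self_eq_norm_sq]
    have expand : 2 * t * ‖w‖ ^ 2 + t ^ 2 * ((1 - τ) * ‖R w‖ ^ 2 + τ * ‖S w‖ ^ 2)
        = ((1 - τ) * (‖u‖ ^ 2 + 2 * (t * ⟪u, w⟫) + t ^ 2 * ‖R w‖ ^ 2)
            + τ * (‖v‖ ^ 2 + 2 * (t * ⟪v, w⟫) + t ^ 2 * ‖S w‖ ^ 2))
          - ((1 - τ) * ‖u‖ ^ 2 + τ * ‖v‖ ^ 2) := by
      rw [← iw]; ring
    rw [expand]
    linarith [h]
  have hw0 : ‖w‖ ^ 2 = 0 := by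
    set c : ℝ := ‖w‖ ^ 2 with hc
    set D : ℝ := (1 - τ) * ‖R w‖ ^ 2 + τ * ‖S w‖ ^ 2 with hD
    have hDnn : 0 ≤ D := by rw [hD]; positivity
    have hD1 : (0:ℝ) < D + 1 := by linarith
    have h := hkey (-c / (D + 1))
    have h3 : 2 * (-c / (D + 1)) * c + (-c / (D + 1)) ^ 2 * D
        = -(c ^ 2 * (D + 2)) / (D + 1) ^ 2 := by
      field_simp; ring
    rw [h3] at h
    have h4 : c ^ 2 * (D + 2) ≤ 0 := by
      by_contra hcon
      push_neg at hcon
      have : -(c ^ 2 * (D + 2)) / (D + 1) ^ 2 < 0 :=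
        div_neg_of_neg_of_pos (by linarith) (by positivity)
      linarith
    have h5 : c ^ 2 ≤ 0 := by nlinarith
    have h6 : c ^ 2 = 0 := le_antisymm h5 (sq_nonneg c)
    exact pow_eq_zero_iff two_ne_zero |>.mp h6
  have hwz : w = 0 := norm_eq_zero.mp (pow_eq_zero_iff two_ne_zero |>.mp hw0)
  -- hence (1-τ)‖u‖ = τ‖v‖
  have hbal : (1 - τ) * ‖u‖ = τ * ‖v‖ := by
    have heq : (1 - τ) • u = -(τ • v) := by
      have h2 := hwz
      rw [hw, add_eq_zero_iff_eq_neg] at h2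
      exact h2
    have hnorm := congrArg norm heq
    rw [norm_neg, norm_smul, norm_smul, Real.norm_eq_abs, Real.norm_eq_abs,
      abs_of_pos hτ1', abs_of_pos hτ0] at hnorm
    exact hnorm
  -- conclude
  rw [isMinOn_iff]
  intro f _
  have hQ := hQle f
  rw [← hu, ← hv] at hQ
  rw [← hu, ← hv, ← hbal, max_self]
  have hma := le_max_left ((1 - τ) * ‖R f - r‖) (τ * ‖S f - s‖)
  have hmb := le_max_right ((1 - τ) * ‖R f - r‖) (τ * ‖S f - s‖)
  have hmnn : 0 ≤ max ((1 - τ) * ‖R f - r‖) (τ * ‖S f - s‖) :=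
    le_trans (by positivity) hma
  have h1 : τ * ((1 - τ) * ‖R f - r‖) ^ 2 + (1 - τ) * (τ * ‖S f - s‖) ^ 2
      ≤ (max ((1 - τ) * ‖R f - r‖) (τ * ‖S f - s‖)) ^ 2 := by
    nlinarith [mul_le_mul hma hma (by positivity : (0:ℝ) ≤ (1 - τ) * ‖R f - r‖) hmnn,
      mul_le_mul hmb hmb (by positivity : (0:ℝ) ≤ τ * ‖S f - s‖) hmnn]
  have h2 : ((1 - τ) * ‖u‖) ^ 2 = τ * (1 - τ) * ((1 - τ) * ‖u‖ ^ 2 + τ * ‖v‖ ^ 2) := by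
    linear_combination (1 - τ) * ((1 - τ) * ‖u‖ + τ * ‖v‖) * hbal
  have h3 : τ * (1 - τ) * ((1 - τ) * ‖u‖ ^ 2 + τ * ‖v‖ ^ 2)
      ≤ τ * ((1 - τ) * ‖R f - r‖) ^ 2 + (1 - τ) * (τ * ‖S f - s‖) ^ 2 := by
    nlinarith [mul_le_mul_of_nonneg_left hQ (mul_nonneg hτ0.le hτ1'.le)]
  have hsq : ((1 - τ) * ‖u‖) ^ 2
      ≤ (max ((1 - τ) * ‖R f - r‖) (τ * ‖S f - s‖)) ^ 2 := by linarith
  nlinarith [hsq, hmnn, (by positivity : (0:ℝ) ≤ (1 - τ) * ‖u‖)]
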